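/- Let φ be a (1,1)-tensor field and ψ a (0,2)-tensor field on a smooth manifold. Define Φ₂(φ,ψ)(X,Y,Z) := (L_{φ(X)}ψ − L_X(ψ∘₂φ))(Y,Z) − (L_{φ(Y)}ψ − L_Y(ψ∘₂φ))(X,Z) − (ψ∘₂φ)([X,Y],Z) + (ψ∘₁φ)([X,Y],Z). Then Φ₂(φ,ψ) is a (0,3)-tensor field, i.e., C^∞(M)-linear in each argument X, Y, Z. -/

import Mathlib

open scoped BigOperators

noncomputable section

/-- Points of the model space `ℝ^m`. -/
abbrev Pt (m : ℕ) := Fin m → ℝ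
/-- Vector fields (or 1-forms) on `ℝ^m`, given by their components. -/
abbrev VF (m : ℕ) := Pt m → Fin m → ℝ
/-- (0,2)-tensor fields (or (1,1)-tensor fields) on `ℝ^m`, given by components. -/
abbrev T02 (m : ℕ) := Pt m → Fin m → Fin m → ℝ
/-- (0,3)- or (1,2)-tensor fields on `ℝ^m`, given by components. -/
abbrev T3 (m : ℕ) := Pt m → Fin m → Fin m → Fin m → ℝ

variable {m : ℕ}

/-- `i`-th partial derivative of a scalar function. -/
def pd (i : Fin m) (f : Pt m → ℝ) (x : Pt m) : ℝ :=
  fderiv ℝ f x (Pi.single i 1)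

/-- Derivative of a function `f` along a vector field `X`. -/
def Xdot (X : VF m) (f : Pt m → ℝ) (x : Pt m) : ℝ :=
  ∑ k, X x k * pd k f x

/-- Lie bracket of vector fields, in components. -/
def lieB (X Y : VF m) : VF m := fun x i =>
  ∑ k, (X x k * pd k (fun y => Y y i) x - Y x k * pd k (fun y => X y i) x)

/-- Evaluation `ψ(X)` of a 1-form on a vector field. -/
def ev1 (ψ X : VF m) (x : Pt m) : ℝ := ∑ i, ψ x i * X x i

/-- Exterior derivative of a function, as a 1-form. -/
def dF (f : Pt m → ℝ) : VF m := fun x i => pd i f x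

/-- Exterior derivative of a 1-form, as a 2-form: `(dψ)_{ij} = ∂_i ψ_j - ∂_j ψ_i`. -/
def d2 (ψ : VF m) : T02 m := fun x i j =>
  pd i (fun y => ψ y j) x - pd j (fun y => ψ y i) x

/-- Evaluation of a (0,2)-tensor field on two vector fields. -/
def ev2 (T : T02 m) (X Y : VF m) (x : Pt m) : ℝ :=
  ∑ i, ∑ j, T x i j * X x i * Y x j

/-- Lie derivative of a 1-form `ψ` along `X`, evaluated on `Y`:
`(L_X ψ)(Y) = X·(ψ(Y)) - ψ([X,Y])`. -/
def lie1 (X ψ Y : VF m) (x : Pt m) : ℝ :=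
  Xdot X (ev1 ψ Y) x - ev1 ψ (lieB X Y) x

/-- Lie derivative of a (0,2)-tensor field `T` along `X`, evaluated on `Y, Z`:
`(L_X T)(Y,Z) = X·T(Y,Z) - T([X,Y],Z) - T(Y,[X,Z])`. -/
def lie2 (X : VF m) (T : T02 m) (Y Z : VF m) (x : Pt m) : ℝ :=
  Xdot X (ev2 T Y Z) x - ev2 T (lieB X Y) Z x - ev2 T Y (lieB X Z) x

/-- Application of a (1,1)-tensor field to a vector field: `(φX)^i = φ^i_j X^j`. -/
def appT (φ : T02 m) (X : VF m) : VF m := fun x i => ∑ j, φ x i j * X x j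

/-- `(ψ∘₁φ)(X,Y) = ψ(φX,Y)`, in components `(ψ∘₁φ)_{ij} = ψ_{aj} φ^a_i`. -/
def comp1 (ψ φ : T02 m) : T02 m := fun x i j => ∑ a, ψ x a j * φ x a i

/-- `(ψ∘₂φ)(X,Y) = ψ(X,φY)`, in components `(ψ∘₂φ)_{ij} = ψ_{ia} φ^a_j`. -/
def comp2 (ψ φ : T02 m) : T02 m := fun x i j => ∑ a, ψ x i a * φ x a j

/-- Composition `ψ∘φ` of a 1-form with a (1,1)-tensor field:  `(ψ∘φ)_i = ψ_a φ^a_i`. -/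
def compF (ψ : VF m) (φ : T02 m) : VF m := fun x i => ∑ a, ψ x a * φ x a i

/-- Exterior derivative of a 2-form `T`, as a 3-form:
`(dT)_{ijk} = ∂_i T_{jk} - ∂_j T_{ik} + ∂_k T_{ij}`. -/
def d3 (T : T02 m) : T3 m := fun x i j k =>
  pd i (fun y => T y j k) x - pd j (fun y => T y i k) x + pd k (fun y => T y i j) x

/-- Evaluation of a (0,3)-tensor field on three vector fields. -/
def ev3 (U : T3 m) (X Y Z : VF m) (x : Pt m) : ℝ :=
  ∑ i, ∑ j, ∑ k, U x i j k * X x i * Y x j * Z x k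

/-- Pointwise sum of vector fields. -/
def addV (X Y : VF m) : VF m := fun x i => X x i + Y x i

/-- Pointwise multiplication of a vector field by a function. -/
def smulV (f : Pt m → ℝ) (X : VF m) : VF m := fun x i => f x * X x i

-- differentiability helpers
lemma diffVF {X : VF m} (hX : ContDiff ℝ (⊤ : ℕ∞) X) (i : Fin m) (x : Pt m) :
    DifferentiableAt ℝ (fun y => X y i) x :=
  ((contDiff_pi.mp hX i).differentiable (by simp)).differentiableAt

lemma diffT02 {T : T02 m} (hT : ContDiff ℝ (⊤ : ℕ∞) T) (i j : Fin m) (x : Pt m) :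
    DifferentiableAt ℝ (fun y => T y i j) x :=
  ((contDiff_pi.mp (contDiff_pi.mp hT i) j).differentiable (by simp)).differentiableAt

lemma diff_ev2 {T : T02 m} {A B : VF m} {x : Pt m}
    (hT : ∀ i j, DifferentiableAt ℝ (fun y => T y i j) x)
    (hA : ∀ i, DifferentiableAt ℝ (fun y => A y i) x)
    (hB : ∀ i, DifferentiableAt ℝ (fun y => B y i) x) :
    DifferentiableAt ℝ (ev2 T A B) x := by
  unfold ev2
  exact DifferentiableAt.fun_sum fun i _ => DifferentiableAt.fun_sum fun j _ =>
    ((hT i j).mul (hA i)).mul (hB j)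

lemma diff_appT {φ : T02 m} {X : VF m} {x : Pt m}
    (hφ : ∀ i j, DifferentiableAt ℝ (fun y => φ y i j) x)
    (hX : ∀ i, DifferentiableAt ℝ (fun y => X y i) x) (i : Fin m) :
    DifferentiableAt ℝ (fun y => appT φ X y i) x := by
  unfold appT
  exact DifferentiableAt.fun_sum fun j _ => (hφ i j).mul (hX j)

lemma diff_comp1 {ψ φ : T02 m} {x : Pt m}
    (hψ : ∀ i j, DifferentiableAt ℝ (fun y => ψ y i j) x)
    (hφ : ∀ i j, DifferentiableAt ℝ (fun y => φ y i j) x) (i j : Fin m) :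
    DifferentiableAt ℝ (fun y => comp1 ψ φ y i j) x := by
  unfold comp1
  exact DifferentiableAt.fun_sum fun a _ => (hψ a j).mul (hφ a i)

lemma diff_comp2 {ψ φ : T02 m} {x : Pt m}
    (hψ : ∀ i j, DifferentiableAt ℝ (fun y => ψ y i j) x)
    (hφ : ∀ i j, DifferentiableAt ℝ (fun y => φ y i j) x) (i j : Fin m) :
    DifferentiableAt ℝ (fun y => comp2 ψ φ y i j) x := by
  unfold comp2
  exact DifferentiableAt.fun_sum fun a _ => (hψ i a).mul (hφ a j)

-- pd rules
lemma pd_add {f g : Pt m → ℝ} {x : Pt m} (i : Fin m)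
    (hf : DifferentiableAt ℝ f x) (hg : DifferentiableAt ℝ g x) :
    pd i (fun y => f y + g y) x = pd i f x + pd i g x := by
  unfold pd; rw [fderiv_fun_add hf hg]; simp

lemma pd_mul {f g : Pt m → ℝ} {x : Pt m} (i : Fin m)
    (hf : DifferentiableAt ℝ f x) (hg : DifferentiableAt ℝ g x) :
    pd i (fun y => f y * g y) x = pd i f x * g x + f x * pd i g x := by
  unfold pd; rw [fderiv_fun_mul hf hg]
  simp [smul_eq_mul]; ring

-- Xdot rules
lemma Xdot_addV (X X' : VF m) (g : Pt m → ℝ) (x : Pt m) :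
    Xdot (addV X X') g x = Xdot X g x + Xdot X' g x := by
  unfold Xdot addV
  rw [← Finset.sum_add_distrib]
  exact Finset.sum_congr rfl fun k _ => by ring

lemma Xdot_smulV (f : Pt m → ℝ) (X : VF m) (g : Pt m → ℝ) (x : Pt m) :
    Xdot (smulV f X) g x = f x * Xdot X g x := by
  unfold Xdot smulV
  rw [Finset.mul_sum]
  exact Finset.sum_congr rfl fun k _ => by ring

lemma Xdot_fun_add {f g : Pt m → ℝ} {x : Pt m} (X : VF m)
    (hf : DifferentiableAt ℝ f x) (hg : DifferentiableAt ℝ g x) :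
    Xdot X (fun y => f y + g y) x = Xdot X f x + Xdot X g x := by
  unfold Xdot
  rw [← Finset.sum_add_distrib]
  exact Finset.sum_congr rfl fun k _ => by rw [pd_add k hf hg]; ring

lemma Xdot_fun_mul {f g : Pt m → ℝ} {x : Pt m} (X : VF m)
    (hf : DifferentiableAt ℝ f x) (hg : DifferentiableAt ℝ g x) :
    Xdot X (fun y => f y * g y) x = f x * Xdot X g x + g x * Xdot X f x := by
  unfold Xdot
  rw [Finset.mul_sum, Finset.mul_sum, ← Finset.sum_add_distrib]
  exact Finset.sum_congr rfl fun k _ => by rw [pd_mul k hf hg]; ring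

-- ev2 linearity
lemma ev2_left_eq {T : T02 m} {V P Q B : VF m} {x : Pt m} {a b : ℝ}
    (h : ∀ i, V x i = a * P x i + b * Q x i) :
    ev2 T V B x = a * ev2 T P B x + b * ev2 T Q B x := by
  unfold ev2
  rw [Finset.mul_sum, Finset.mul_sum, ← Finset.sum_add_distrib]
  refine Finset.sum_congr rfl fun i _ => ?_
  rw [Finset.mul_sum, Finset.mul_sum, ← Finset.sum_add_distrib]
  refine Finset.sum_congr rfl fun j _ => ?_
  rw [h i]; ring

lemma ev2_right_eq {T : T02 m} {V P Q B : VF m} {x : Pt m} {a b : ℝ}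
    (h : ∀ j, B x j = a * P x j + b * Q x j) :
    ev2 T V B x = a * ev2 T V P x + b * ev2 T V Q x := by
  unfold ev2
  rw [Finset.mul_sum, Finset.mul_sum, ← Finset.sum_add_distrib]
  refine Finset.sum_congr rfl fun i _ => ?_
  rw [Finset.mul_sum, Finset.mul_sum, ← Finset.sum_add_distrib]
  refine Finset.sum_congr rfl fun j _ => ?_
  rw [h j]; ring

-- lieB rules
lemma lieB_add_left {X X' Y : VF m} {x : Pt m}
    (hX : ∀ i, DifferentiableAt ℝ (fun y => X y i) x)
    (hX' : ∀ i, DifferentiableAt ℝ (fun y => X' y i) x) (i : Fin m) :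
    lieB (addV X X') Y x i = lieB X Y x i + lieB X' Y x i := by
  unfold lieB addV
  rw [← Finset.sum_add_distrib]
  refine Finset.sum_congr rfl fun k _ => ?_
  rw [pd_add k (hX i) (hX' i)]; ring

lemma lieB_add_right {X Y Y' : VF m} {x : Pt m}
    (hY : ∀ i, DifferentiableAt ℝ (fun y => Y y i) x)
    (hY' : ∀ i, DifferentiableAt ℝ (fun y => Y' y i) x) (i : Fin m) :
    lieB X (addV Y Y') x i = lieB X Y x i + lieB X Y' x i := by
  unfold lieB addV
  rw [← Finset.sum_add_distrib]
  refine Finset.sum_congr rfl fun k _ => ?_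
  rw [pd_add k (hY i) (hY' i)]; ring

lemma lieB_smul_left {f : Pt m → ℝ} {X Y : VF m} {x : Pt m}
    (hf : DifferentiableAt ℝ f x)
    (hX : ∀ i, DifferentiableAt ℝ (fun y => X y i) x) (i : Fin m) :
    lieB (smulV f X) Y x i = f x * lieB X Y x i - Xdot Y f x * X x i := by
  unfold lieB smulV Xdot
  rw [Finset.mul_sum, Finset.sum_mul, ← Finset.sum_sub_distrib]
  refine Finset.sum_congr rfl fun k _ => ?_
  rw [pd_mul k hf (hX i)]; ring

lemma lieB_smul_right {f : Pt m → ℝ} {X Y : VF m} {x : Pt m}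
    (hf : DifferentiableAt ℝ f x)
    (hY : ∀ i, DifferentiableAt ℝ (fun y => Y y i) x) (i : Fin m) :
    lieB X (smulV f Y) x i = f x * lieB X Y x i + Xdot X f x * Y x i := by
  unfold lieB smulV Xdot
  rw [Finset.mul_sum, Finset.sum_mul, ← Finset.sum_add_distrib]
  refine Finset.sum_congr rfl fun k _ => ?_
  rw [pd_mul k hf (hY i)]; ring

-- appT rules
lemma appT_addV (φ : T02 m) (X X' : VF m) :
    appT φ (addV X X') = addV (appT φ X) (appT φ X') := by
  funext x i; unfold appT addV
  rw [← Finset.sum_add_distrib]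
  exact Finset.sum_congr rfl fun j _ => by ring

lemma appT_smulV (φ : T02 m) (f : Pt m → ℝ) (X : VF m) :
    appT φ (smulV f X) = smulV f (appT φ X) := by
  funext x i; unfold appT smulV
  rw [Finset.mul_sum]
  exact Finset.sum_congr rfl fun j _ => by ring

-- lie2 additivity
lemma lie2_add1 {W W' : VF m} {T : T02 m} {A B : VF m} {x : Pt m}
    (hW : ∀ i, DifferentiableAt ℝ (fun y => W y i) x)
    (hW' : ∀ i, DifferentiableAt ℝ (fun y => W' y i) x) :
    lie2 (addV W W') T A B x = lie2 W T A B x + lie2 W' T A B x := by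
  unfold lie2
  rw [Xdot_addV,
    ev2_left_eq (V := lieB (addV W W') A) (B := B)
      (P := lieB W A) (Q := lieB W' A) (a := 1) (b := 1)
      (fun i => by rw [lieB_add_left hW hW' i]; ring),
    ev2_right_eq (V := A) (B := lieB (addV W W') B)
      (P := lieB W B) (Q := lieB W' B) (a := 1) (b := 1)
      (fun j => by rw [lieB_add_left hW hW' j]; ring)]
  ring

lemma lie2_add2 {W : VF m} {T : T02 m} {A A' B : VF m} {x : Pt m}
    (hA : ∀ i, DifferentiableAt ℝ (fun y => A y i) x)
    (hA' : ∀ i, DifferentiableAt ℝ (fun y => A' y i) x)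
    (hg : DifferentiableAt ℝ (ev2 T A B) x)
    (hg' : DifferentiableAt ℝ (ev2 T A' B) x) :
    lie2 W T (addV A A') B x = lie2 W T A B x + lie2 W T A' B x := by
  unfold lie2
  have h1 : ev2 T (addV A A') B = fun y => ev2 T A B y + ev2 T A' B y := by
    funext y
    have := ev2_left_eq (T := T) (V := addV A A') (P := A) (Q := A') (B := B)
      (x := y) (a := 1) (b := 1) (fun i => by simp [addV])
    simpa using this
  rw [h1, Xdot_fun_add W hg hg',
    ev2_left_eq (V := lieB W (addV A A')) (B := B)
      (P := lieB W A) (Q := lieB W A') (a := 1) (b := 1)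
      (fun i => by rw [lieB_add_right hA hA' i]; ring),
    ev2_left_eq (V := addV A A') (B := lieB W B)
      (P := A) (Q := A') (a := 1) (b := 1)
      (fun i => by simp [addV])]
  ring

lemma lie2_add3 {W : VF m} {T : T02 m} {A B B' : VF m} {x : Pt m}
    (hB : ∀ i, DifferentiableAt ℝ (fun y => B y i) x)
    (hB' : ∀ i, DifferentiableAt ℝ (fun y => B' y i) x)
    (hg : DifferentiableAt ℝ (ev2 T A B) x)
    (hg' : DifferentiableAt ℝ (ev2 T A B') x) :
    lie2 W T A (addV B B') x = lie2 W T A B x + lie2 W T A B' x := by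
  unfold lie2
  have h1 : ev2 T A (addV B B') = fun y => ev2 T A B y + ev2 T A B' y := by
    funext y
    have := ev2_right_eq (T := T) (V := A) (P := B) (Q := B') (B := addV B B')
      (x := y) (a := 1) (b := 1) (fun j => by simp [addV])
    simpa using this
  rw [h1, Xdot_fun_add W hg hg',
    ev2_right_eq (V := lieB W A) (B := addV B B')
      (P := B) (Q := B') (a := 1) (b := 1)
      (fun j => by simp [addV]),
    ev2_right_eq (V := A) (B := lieB W (addV B B'))
      (P := lieB W B) (Q := lieB W B') (a := 1) (b := 1)
      (fun j => by rw [lieB_add_right hB hB' j]; ring)]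
  ring

-- lie2 smul rules
lemma lie2_smul1 {f : Pt m → ℝ} {W : VF m} {T : T02 m} {A B : VF m} {x : Pt m}
    (hf : DifferentiableAt ℝ f x)
    (hW : ∀ i, DifferentiableAt ℝ (fun y => W y i) x) :
    lie2 (smulV f W) T A B x =
      f x * lie2 W T A B x + Xdot A f x * ev2 T W B x + Xdot B f x * ev2 T A W x := by
  unfold lie2
  rw [Xdot_smulV,
    ev2_left_eq (V := lieB (smulV f W) A) (B := B)
      (P := lieB W A) (Q := W) (a := f x) (b := -(Xdot A f x))
      (fun i => by rw [lieB_smul_left hf hW i]; ring),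
    ev2_right_eq (V := A) (B := lieB (smulV f W) B)
      (P := lieB W B) (Q := W) (a := f x) (b := -(Xdot B f x))
      (fun j => by rw [lieB_smul_left hf hW j]; ring)]
  ring

lemma lie2_smul2 {f : Pt m → ℝ} {W : VF m} {T : T02 m} {A B : VF m} {x : Pt m}
    (hf : DifferentiableAt ℝ f x)
    (hA : ∀ i, DifferentiableAt ℝ (fun y => A y i) x)
    (hg : DifferentiableAt ℝ (ev2 T A B) x) :
    lie2 W T (smulV f A) B x = f x * lie2 W T A B x := by
  unfold lie2
  have h1 : ev2 T (smulV f A) B = fun y => f y * ev2 T A B y := by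
    funext y
    have := ev2_left_eq (T := T) (V := smulV f A) (P := A) (Q := A) (B := B)
      (x := y) (a := f y) (b := 0) (fun i => by simp [smulV])
    simpa using this
  rw [h1, Xdot_fun_mul W hf hg,
    ev2_left_eq (V := lieB W (smulV f A)) (B := B)
      (P := lieB W A) (Q := A) (a := f x) (b := Xdot W f x)
      (fun i => by rw [lieB_smul_right hf hA i]),
    ev2_left_eq (V := smulV f A) (B := lieB W B)
      (P := A) (Q := A) (a := f x) (b := 0)
      (fun i => by simp [smulV])]
  ring

lemma lie2_smul3 {f : Pt m → ℝ} {W : VF m} {T : T02 m} {A B : VF m} {x : Pt m}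
    (hf : DifferentiableAt ℝ f x)
    (hB : ∀ i, DifferentiableAt ℝ (fun y => B y i) x)
    (hg : DifferentiableAt ℝ (ev2 T A B) x) :
    lie2 W T A (smulV f B) x = f x * lie2 W T A B x := by
  unfold lie2
  have h1 : ev2 T A (smulV f B) = fun y => f y * ev2 T A B y := by
    funext y
    have := ev2_right_eq (T := T) (V := A) (P := B) (Q := B) (B := smulV f B)
      (x := y) (a := f y) (b := 0) (fun j => by simp [smulV])
    simpa using this
  rw [h1, Xdot_fun_mul W hf hg,
    ev2_right_eq (V := lieB W A) (B := smulV f B)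
      (P := B) (Q := B) (a := f x) (b := 0)
      (fun j => by simp [smulV]),
    ev2_right_eq (V := A) (B := lieB W (smulV f B))
      (P := lieB W B) (Q := B) (a := f x) (b := Xdot W f x)
      (fun j => by rw [lieB_smul_right hf hB j])]
  ring

-- composition identities
lemma ev2_comp1 {ψ φ : T02 m} {X Z : VF m} {x : Pt m} :
    ev2 ψ (appT φ X) Z x = ev2 (comp1 ψ φ) X Z x := by
  unfold ev2 appT comp1
  simp only [Finset.mul_sum, Finset.sum_mul]
  rw [Finset.sum_comm]
  conv_rhs => rw [Finset.sum_comm]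
  refine Finset.sum_congr rfl fun j _ => ?_
  rw [Finset.sum_comm]
  refine Finset.sum_congr rfl fun i _ => ?_
  refine Finset.sum_congr rfl fun a _ => ?_
  ring

lemma ev2_comp2 {ψ φ : T02 m} {X Y : VF m} {x : Pt m} :
    ev2 ψ X (appT φ Y) x = ev2 (comp2 ψ φ) X Y x := by
  unfold ev2 appT comp2
  simp only [Finset.mul_sum, Finset.sum_mul]
  refine Finset.sum_congr rfl fun i _ => ?_
  rw [Finset.sum_comm]
  refine Finset.sum_congr rfl fun j _ => ?_
  refine Finset.sum_congr rfl fun a _ => ?_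
  ring

/-- The second operator of Theorem 3.4:
`Φ₂(φ,ψ)(X,Y,Z) = (L_{φ(X)}ψ − L_X(ψ∘₂φ))(Y,Z) − (L_{φ(Y)}ψ − L_Y(ψ∘₂φ))(X,Z)
  − (ψ∘₂φ)([X,Y],Z) + (ψ∘₁φ)([X,Y],Z)`. -/
def Phi2 (φ ψ : T02 m) (X Y Z : VF m) (x : Pt m) : ℝ :=
  (lie2 (appT φ X) ψ Y Z x - lie2 X (comp2 ψ φ) Y Z x)
  - (lie2 (appT φ Y) ψ X Z x - lie2 Y (comp2 ψ φ) X Z x)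
  - ev2 (comp2 ψ φ) (lieB X Y) Z x + ev2 (comp1 ψ φ) (lieB X Y) Z x

/-- Theorem 3.4, second operator: `Φ₂(φ,ψ)` is a (0,3)-tensor field, i.e. it is
`C^∞(M)`-linear in each of its arguments `X, Y, Z`. -/
theorem stmt13 (m : ℕ) (φ ψ : T02 m)
    (hφ : ContDiff ℝ (⊤ : ℕ∞) φ) (hψ : ContDiff ℝ (⊤ : ℕ∞) ψ) :
    ∀ (f : Pt m → ℝ), ContDiff ℝ (⊤ : ℕ∞) f →
    ∀ (X X' Y Z : VF m), ContDiff ℝ (⊤ : ℕ∞) X → ContDiff ℝ (⊤ : ℕ∞) X' →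
      ContDiff ℝ (⊤ : ℕ∞) Y → ContDiff ℝ (⊤ : ℕ∞) Z →
    ∀ x : Pt m,
      (Phi2 φ ψ (addV X X') Y Z x = Phi2 φ ψ X Y Z x + Phi2 φ ψ X' Y Z x) ∧
      (Phi2 φ ψ (smulV f X) Y Z x = f x * Phi2 φ ψ X Y Z x) ∧
      (Phi2 φ ψ X (addV Y X') Z x = Phi2 φ ψ X Y Z x + Phi2 φ ψ X X' Z x) ∧
      (Phi2 φ ψ X (smulV f Y) Z x = f x * Phi2 φ ψ X Y Z x) ∧
      (Phi2 φ ψ X Y (addV Z X') x = Phi2 φ ψ X Y Z x + Phi2 φ ψ X Y X' x) ∧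
      (Phi2 φ ψ X Y (smulV f Z) x = f x * Phi2 φ ψ X Y Z x) := by
  intro f hf X X' Y Z hX hX' hY hZ x
  have cφ : ∀ (i j : Fin m) (x : Pt m), DifferentiableAt ℝ (fun y => φ y i j) x :=
    fun i j x => diffT02 hφ i j x
  have cψ : ∀ (i j : Fin m) (x : Pt m), DifferentiableAt ℝ (fun y => ψ y i j) x :=
    fun i j x => diffT02 hψ i j x
  have cX : ∀ (i : Fin m) (x : Pt m), DifferentiableAt ℝ (fun y => X y i) x := fun i x => diffVF hX i x
  have cX' : ∀ (i : Fin m) (x : Pt m), DifferentiableAt ℝ (fun y => X' y i) x := fun i x => diffVF hX' i x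
  have cY : ∀ (i : Fin m) (x : Pt m), DifferentiableAt ℝ (fun y => Y y i) x := fun i x => diffVF hY i x
  have cZ : ∀ (i : Fin m) (x : Pt m), DifferentiableAt ℝ (fun y => Z y i) x := fun i x => diffVF hZ i x
  have cf : ∀ x : Pt m, DifferentiableAt ℝ f x :=
    fun x => (hf.differentiable (by simp)).differentiableAt
  have cc1 : ∀ (i j : Fin m) (x : Pt m), DifferentiableAt ℝ (fun y => comp1 ψ φ y i j) x :=
    fun i j x => diff_comp1 (fun i j => cψ i j x) (fun i j => cφ i j x) i j
  have cc2 : ∀ (i j : Fin m) (x : Pt m), DifferentiableAt ℝ (fun y => comp2 ψ φ y i j) x :=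
    fun i j x => diff_comp2 (fun i j => cψ i j x) (fun i j => cφ i j x) i j
  have caX : ∀ (i : Fin m) (x : Pt m), DifferentiableAt ℝ (fun y => appT φ X y i) x :=
    fun i x => diff_appT (fun i j => cφ i j x) (fun i => cX i x) i
  have caX' : ∀ (i : Fin m) (x : Pt m), DifferentiableAt ℝ (fun y => appT φ X' y i) x :=
    fun i x => diff_appT (fun i j => cφ i j x) (fun i => cX' i x) i
  have caY : ∀ (i : Fin m) (x : Pt m), DifferentiableAt ℝ (fun y => appT φ Y y i) x :=
    fun i x => diff_appT (fun i j => cφ i j x) (fun i => cY i x) i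
  refine ⟨?_, ?_, ?_, ?_, ?_, ?_⟩
  · -- additivity in X
    unfold Phi2
    rw [appT_addV,
      lie2_add1 (fun i => caX i x) (fun i => caX' i x),
      lie2_add1 (fun i => cX i x) (fun i => cX' i x),
      lie2_add2 (fun i => cX i x) (fun i => cX' i x)
        (diff_ev2 (fun i j => cψ i j x) (fun i => cX i x) (fun i => cZ i x))
        (diff_ev2 (fun i j => cψ i j x) (fun i => cX' i x) (fun i => cZ i x)),
      lie2_add2 (fun i => cX i x) (fun i => cX' i x)
        (diff_ev2 (fun i j => cc2 i j x) (fun i => cX i x) (fun i => cZ i x))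
        (diff_ev2 (fun i j => cc2 i j x) (fun i => cX' i x) (fun i => cZ i x)),
      ev2_left_eq (T := comp2 ψ φ) (V := lieB (addV X X') Y) (B := Z)
        (P := lieB X Y) (Q := lieB X' Y) (a := 1) (b := 1)
        (fun i => by rw [lieB_add_left (fun i => cX i x) (fun i => cX' i x) i]; ring),
      ev2_left_eq (T := comp1 ψ φ) (V := lieB (addV X X') Y) (B := Z)
        (P := lieB X Y) (Q := lieB X' Y) (a := 1) (b := 1)
        (fun i => by rw [lieB_add_left (fun i => cX i x) (fun i => cX' i x) i]; ring)]
    ring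
  · -- smul in X
    unfold Phi2
    rw [appT_smulV,
      lie2_smul1 (cf x) (fun i => caX i x),
      lie2_smul1 (cf x) (fun i => cX i x),
      lie2_smul2 (cf x) (fun i => cX i x)
        (diff_ev2 (fun i j => cψ i j x) (fun i => cX i x) (fun i => cZ i x)),
      lie2_smul2 (cf x) (fun i => cX i x)
        (diff_ev2 (fun i j => cc2 i j x) (fun i => cX i x) (fun i => cZ i x)),
      ev2_left_eq (T := comp2 ψ φ) (V := lieB (smulV f X) Y) (B := Z)
        (P := lieB X Y) (Q := X) (a := f x) (b := -(Xdot Y f x))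
        (fun i => by rw [lieB_smul_left (cf x) (fun i => cX i x) i]; ring),
      ev2_left_eq (T := comp1 ψ φ) (V := lieB (smulV f X) Y) (B := Z)
        (P := lieB X Y) (Q := X) (a := f x) (b := -(Xdot Y f x))
        (fun i => by rw [lieB_smul_left (cf x) (fun i => cX i x) i]; ring),
      ev2_comp1 (ψ := ψ) (φ := φ) (X := X) (Z := Z),
      ev2_comp2 (ψ := ψ) (φ := φ) (X := Y) (Y := X)]
    ring
  · -- additivity in Y
    unfold Phi2
    rw [appT_addV,
      lie2_add2 (fun i => cY i x) (fun i => cX' i x)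
        (diff_ev2 (fun i j => cψ i j x) (fun i => cY i x) (fun i => cZ i x))
        (diff_ev2 (fun i j => cψ i j x) (fun i => cX' i x) (fun i => cZ i x)),
      lie2_add2 (fun i => cY i x) (fun i => cX' i x)
        (diff_ev2 (fun i j => cc2 i j x) (fun i => cY i x) (fun i => cZ i x))
        (diff_ev2 (fun i j => cc2 i j x) (fun i => cX' i x) (fun i => cZ i x)),
      lie2_add1 (fun i => caY i x) (fun i => caX' i x),
      lie2_add1 (fun i => cY i x) (fun i => cX' i x),
      ev2_left_eq (T := comp2 ψ φ) (V := lieB X (addV Y X')) (B := Z)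
        (P := lieB X Y) (Q := lieB X X') (a := 1) (b := 1)
        (fun i => by rw [lieB_add_right (fun i => cY i x) (fun i => cX' i x) i]; ring),
      ev2_left_eq (T := comp1 ψ φ) (V := lieB X (addV Y X')) (B := Z)
        (P := lieB X Y) (Q := lieB X X') (a := 1) (b := 1)
        (fun i => by rw [lieB_add_right (fun i => cY i x) (fun i => cX' i x) i]; ring)]
    ring
  · -- smul in Y
    unfold Phi2
    rw [appT_smulV,
      lie2_smul2 (cf x) (fun i => cY i x)
        (diff_ev2 (fun i j => cψ i j x) (fun i => cY i x) (fun i => cZ i x)),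
      lie2_smul2 (cf x) (fun i => cY i x)
        (diff_ev2 (fun i j => cc2 i j x) (fun i => cY i x) (fun i => cZ i x)),
      lie2_smul1 (cf x) (fun i => caY i x),
      lie2_smul1 (cf x) (fun i => cY i x),
      ev2_left_eq (T := comp2 ψ φ) (V := lieB X (smulV f Y)) (B := Z)
        (P := lieB X Y) (Q := Y) (a := f x) (b := Xdot X f x)
        (fun i => by rw [lieB_smul_right (cf x) (fun i => cY i x) i]),
      ev2_left_eq (T := comp1 ψ φ) (V := lieB X (smulV f Y)) (B := Z)
        (P := lieB X Y) (Q := Y) (a := f x) (b := Xdot X f x)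
        (fun i => by rw [lieB_smul_right (cf x) (fun i => cY i x) i]),
      ev2_comp1 (ψ := ψ) (φ := φ) (X := Y) (Z := Z),
      ev2_comp2 (ψ := ψ) (φ := φ) (X := X) (Y := Y)]
    ring
  · -- additivity in Z
    unfold Phi2
    rw [lie2_add3 (fun i => cZ i x) (fun i => cX' i x)
        (diff_ev2 (fun i j => cψ i j x) (fun i => cY i x) (fun i => cZ i x))
        (diff_ev2 (fun i j => cψ i j x) (fun i => cY i x) (fun i => cX' i x)),
      lie2_add3 (fun i => cZ i x) (fun i => cX' i x)
        (diff_ev2 (fun i j => cc2 i j x) (fun i => cY i x) (fun i => cZ i x))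
        (diff_ev2 (fun i j => cc2 i j x) (fun i => cY i x) (fun i => cX' i x)),
      lie2_add3 (fun i => cZ i x) (fun i => cX' i x)
        (diff_ev2 (fun i j => cψ i j x) (fun i => cX i x) (fun i => cZ i x))
        (diff_ev2 (fun i j => cψ i j x) (fun i => cX i x) (fun i => cX' i x)),
      lie2_add3 (fun i => cZ i x) (fun i => cX' i x)
        (diff_ev2 (fun i j => cc2 i j x) (fun i => cX i x) (fun i => cZ i x))
        (diff_ev2 (fun i j => cc2 i j x) (fun i => cX i x) (fun i => cX' i x)),
      ev2_right_eq (T := comp2 ψ φ) (V := lieB X Y) (B := addV Z X')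
        (P := Z) (Q := X') (a := 1) (b := 1) (fun j => by simp [addV]),
      ev2_right_eq (T := comp1 ψ φ) (V := lieB X Y) (B := addV Z X')
        (P := Z) (Q := X') (a := 1) (b := 1) (fun j => by simp [addV])]
    ring
  · -- smul in Z
    unfold Phi2
    rw [lie2_smul3 (cf x) (fun i => cZ i x)
        (diff_ev2 (fun i j => cψ i j x) (fun i => cY i x) (fun i => cZ i x)),
      lie2_smul3 (cf x) (fun i => cZ i x)
        (diff_ev2 (fun i j => cc2 i j x) (fun i => cY i x) (fun i => cZ i x)),
      lie2_smul3 (cf x) (fun i => cZ i x)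
        (diff_ev2 (fun i j => cψ i j x) (fun i => cX i x) (fun i => cZ i x)),
      lie2_smul3 (cf x) (fun i => cZ i x)
        (diff_ev2 (fun i j => cc2 i j x) (fun i => cX i x) (fun i => cZ i x)),
      ev2_right_eq (T := comp2 ψ φ) (V := lieB X Y) (B := smulV f Z)
        (P := Z) (Q := Z) (a := f x) (b := 0) (fun j => by simp [smulV]),
      ev2_right_eq (T := comp1 ψ φ) (V := lieB X Y) (B := smulV f Z)
        (P := Z) (Q := Z) (a := f x) (b := 0) (fun j => by simp [smulV])]
    ring
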